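/- The number of monomials with nonzero coefficient in the polynomial ∏_{j : bit j of k is 1} (1 − x^{2^j}) is exactly 2^{s(k)}, where s(k) is the binary weight of k; consequently, for n = 2^d, the total count ∑_{k=0}^{n−1} 2^{s(k)} of elementary multiplications in the fully flattened formula equals 3^d = n^{log₂ 3}. -/

import Mathlib

open Polynomial Finset

private lemma digitsum_two_mul (k : ℕ) :
    (Nat.digits 2 (2 * k)).sum = (Nat.digits 2 k).sum := by
  rcases Nat.eq_zero_or_pos k with rfl | hk
  · simp
  rw [Nat.digits_def' (by norm_num) (by omega)]
  simp [Nat.mul_div_cancel_left _ (by norm_num : (0:ℕ) < 2), Nat.mul_mod_right]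

private lemma digitsum_two_mul_add_one (k : ℕ) :
    (Nat.digits 2 (2 * k + 1)).sum = (Nat.digits 2 k).sum + 1 := by
  rw [Nat.digits_def' (by norm_num) (by omega)]
  have h1 : (2 * k + 1) % 2 = 1 := by omega
  have h2 : (2 * k + 1) / 2 = k := by omega
  rw [h1, h2]
  simp [add_comm]

private lemma digitsum_eq_length (k : ℕ) :
    (Nat.digits 2 k).sum = k.bitIndices.length := by
  induction k using Nat.binaryRec with
  | zero => simp
  | bit b n ih =>
    cases b
    · rw [Nat.bit_false_apply, digitsum_two_mul, Nat.bitIndices_two_mul,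
        List.length_map, ih]
    · rw [Nat.bit_true_apply, digitsum_two_mul_add_one,
        Nat.bitIndices_two_mul_add_one, List.length_cons, List.length_map, ih]

private lemma mem_bitIndices_iff {k j : ℕ} : j ∈ k.bitIndices ↔ k.testBit j = true := by
  induction k using Nat.binaryRec generalizing j with
  | zero => simp
  | bit b n ih =>
    cases b
    · rw [Nat.bit_false_apply, Nat.bitIndices_two_mul]
      cases j with
      | zero => simp [Nat.testBit_zero, Nat.mul_mod_right]
      | succ j =>
        rw [Nat.testBit_succ]
        have : (2 * n) / 2 = n := by omega
        rw [this, ← ih]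
        constructor
        · intro h
          obtain ⟨a, ha, hh⟩ := List.mem_map.1 h
          obtain rfl : a = j := by omega
          exact ha
        · intro h; exact List.mem_map.2 ⟨j, h, rfl⟩
    · rw [Nat.bit_true_apply, Nat.bitIndices_two_mul_add_one]
      cases j with
      | zero => simp [Nat.testBit_zero, Nat.mul_add_mod]
      | succ j =>
        rw [Nat.testBit_succ]
        have : (2 * n + 1) / 2 = n := by omega
        rw [this, ← ih]
        simp only [List.mem_cons, List.mem_map]
        constructor
        · rintro (h | ⟨a, ha, h⟩); · omega
          obtain rfl : a = j := by omega
          exact ha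
        · intro h; exact Or.inr ⟨j, h, rfl⟩

private lemma filter_eq_bitIndices (k : ℕ) :
    (Finset.range (k + 1)).filter (fun j => k.testBit j) = k.bitIndices.toFinset := by
  ext j
  simp only [Finset.mem_filter, Finset.mem_range, List.mem_toFinset, mem_bitIndices_iff]
  constructor
  · rintro ⟨_, h⟩; exact h
  · intro h
    refine ⟨?_, h⟩
    have h2 : 2 ^ j ≤ k := Nat.two_pow_le_of_mem_bitIndices (mem_bitIndices_iff.2 h)
    have := Nat.lt_two_pow_self (n := j)
    omega

private lemma support_card_mul (p : ℤ[X]) (n : ℕ) (hn : p.natDegree < n) (hp : p ≠ 0) :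
    (p * (1 - X ^ n)).support.card = 2 * p.support.card := by
  have hrw : p * (1 - X ^ n) = p - p * X ^ n := by ring
  have hsupp : (p * (1 - X ^ n)).support
      = p.support ∪ p.support.image (· + n) := by
    ext i
    simp only [hrw, Polynomial.mem_support_iff, Polynomial.coeff_sub,
      Polynomial.coeff_mul_X_pow', Finset.mem_union, Finset.mem_image]
    by_cases h : n ≤ i
    · have h0 : p.coeff i = 0 :=
        Polynomial.coeff_eq_zero_of_natDegree_lt (by omega)
      rw [if_pos h, h0, zero_sub, neg_ne_zero]
      constructor
      · intro h2; exact Or.inr ⟨i - n, h2, by omega⟩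
      · rintro (h2 | ⟨a, ha, rfl⟩)
        · exact (h2 rfl).elim
        · simpa using ha
    · rw [if_neg h, sub_zero]
      constructor
      · exact Or.inl
      · rintro (h2 | ⟨a, ha, rfl⟩)
        · exact h2
        · omega
  have hdisj : Disjoint p.support (p.support.image (· + n)) := by
    rw [Finset.disjoint_left]
    intro i hi h
    rw [Finset.mem_image] at h
    obtain ⟨a, ha, rfl⟩ := h
    have := Polynomial.le_natDegree_of_mem_supp _ hi
    omega
  rw [hsupp, Finset.card_union_of_disjoint hdisj,
    Finset.card_image_of_injective _ (add_left_injective n)]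
  omega

private lemma factor_ne_zero (j : ℕ) : (1 - (X : ℤ[X]) ^ (2 ^ j)) ≠ 0 := by
  intro h
  have h0 : (1 - (X : ℤ[X]) ^ (2 ^ j)).coeff 0 = 1 := by
    rw [Polynomial.coeff_sub, Polynomial.coeff_one, Polynomial.coeff_X_pow]
    have : (2:ℕ) ^ j ≠ 0 := (Nat.pow_pos (by norm_num)).ne'
    simp [Ne.symm this]
  rw [h, Polynomial.coeff_zero] at h0
  exact one_ne_zero h0.symm

private lemma natDegree_factor (j : ℕ) :
    (1 - (X : ℤ[X]) ^ (2 ^ j)).natDegree = 2 ^ j := by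
  have : (1 - (X : ℤ[X]) ^ (2 ^ j)) = -((X : ℤ[X]) ^ 2 ^ j - C 1) := by
    rw [Polynomial.C_1]; ring
  rw [this, Polynomial.natDegree_neg, Polynomial.natDegree_X_pow_sub_C]

private lemma support_card_prod (S : Finset ℕ) :
    (∏ j ∈ S, (1 - (X : ℤ[X]) ^ (2 ^ j))).support.card = 2 ^ S.card := by
  induction S using Finset.induction_on_max with
  | empty =>
    rw [Finset.prod_empty, ← Polynomial.C_1, Polynomial.support_C one_ne_zero]
    simp
  | insert a S ha ih =>
    have hne : ∀ j ∈ S, (1 - (X : ℤ[X]) ^ (2 ^ j)) ≠ 0 := fun j _ => factor_ne_zero j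
    have hprodne : (∏ j ∈ S, (1 - (X : ℤ[X]) ^ (2 ^ j))) ≠ 0 :=
      Finset.prod_ne_zero_iff.2 hne
    have hdeg : (∏ j ∈ S, (1 - (X : ℤ[X]) ^ (2 ^ j))).natDegree = ∑ j ∈ S, 2 ^ j := by
      rw [Polynomial.natDegree_prod _ _ hne]
      exact Finset.sum_congr rfl fun j _ => natDegree_factor j
    have hlt : (∏ j ∈ S, (1 - (X : ℤ[X]) ^ (2 ^ j))).natDegree < 2 ^ a := by
      rw [hdeg]
      calc ∑ j ∈ S, 2 ^ j ≤ ∑ j ∈ Finset.range a, 2 ^ j := by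
            apply Finset.sum_le_sum_of_subset
            intro j hj
            exact Finset.mem_range.2 (ha j hj)
        _ < 2 ^ a := by
            rw [Nat.geomSum_eq (le_refl 2)]
            have hpos : 1 ≤ 2 ^ a := Nat.one_le_two_pow
            omega
    have hanotin : a ∉ S := fun h => lt_irrefl a (ha a h)
    rw [Finset.prod_insert hanotin, mul_comm, support_card_mul _ _ hlt hprodne,
      Finset.card_insert_of_notMem hanotin, ih, pow_succ]
    ring

theorem elementary_multiplication_count :
    (∀ k : ℕ,
      ((∏ j ∈ (Finset.range (k + 1)).filter (fun j => k.testBit j),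
          (1 - (X : ℤ[X]) ^ (2 ^ j))).support.card) =
        2 ^ ((Nat.digits 2 k).sum)) ∧
    ∀ d : ℕ, (∑ k ∈ Finset.range (2 ^ d), 2 ^ ((Nat.digits 2 k).sum)) = 3 ^ d := by
  constructor
  · intro k
    rw [support_card_prod, filter_eq_bitIndices, digitsum_eq_length,
      List.card_toFinset, (Nat.bitIndices_sorted (n := k)).nodup.dedup]
  · intro d
    induction d with
    | zero => simp
    | succ d ih =>
      have split : ∀ (n : ℕ) (f : ℕ → ℕ),
          ∑ k ∈ Finset.range (2 * n), f k
            = ∑ k ∈ Finset.range n, f (2 * k) + ∑ k ∈ Finset.range n, f (2 * k + 1) := by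
        intro n f
        induction n with
        | zero => simp
        | succ n ihn =>
          have : 2 * (n + 1) = (2 * n + 1) + 1 := by ring
          rw [this, Finset.sum_range_succ, Finset.sum_range_succ,
            Finset.sum_range_succ, Finset.sum_range_succ, ihn]
          ring
      have : 2 ^ (d + 1) = 2 * 2 ^ d := by ring
      rw [this, split]
      have h1 : ∀ k : ℕ, (2:ℕ) ^ (Nat.digits 2 (2 * k)).sum = 2 ^ (Nat.digits 2 k).sum :=
        fun k => by rw [digitsum_two_mul]
      have h2 : ∀ k : ℕ, (2:ℕ) ^ (Nat.digits 2 (2 * k + 1)).sum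
          = 2 * 2 ^ (Nat.digits 2 k).sum := fun k => by
        rw [digitsum_two_mul_add_one, pow_succ]; ring
      rw [Finset.sum_congr rfl (fun k _ => h1 k), Finset.sum_congr rfl (fun k _ => h2 k),
        ← Finset.mul_sum, ih, pow_succ]
      ring
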